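/- With a_t, b_t, c_t as in the diffusion bridge kernel, the following hold on (0, T): a_t′ − a_t c_t′/c_t = g²(t) a_t/(2 c_t²) and b_t′ − b_t c_t′/c_t = −g²(t) b_t/(2 c_t²). Consequently the DBIM ODE d(x_t/c_t) = x_T d(a_t/c_t) + x̂ d(b_t/c_t), when expanded as an ODE in x_t, has drift (c_t′/c_t) x_t + (g²(t) a_t/(2c_t²)) x_T − (g²(t) b_t/(2c_t²)) x̂, which coincides with the DDBM probability-flow ODE drift (f + g²/σ_t² − g²/(2c_t²)) x_t + (g² a_t/(2c_t²)) x_T − (g² b_t/(2c_t²)) x̂. -/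

import Mathlib

set_option maxHeartbeats 1000000


/-- Proposition 3 (equivalence of the DBIM ODE to the DDBM probability-flow ODE):
on `(0, T)`, `a_t′ − a_t c_t′/c_t = g² a_t/(2c_t²)` and `b_t′ − b_t c_t′/c_t = −g² b_t/(2c_t²)`,
hence the DBIM ODE drift `(c_t′/c_t) x + (g² a_t/(2c_t²)) x_T − (g² b_t/(2c_t²)) x̂`
coincides with the PF-ODE drift
`(f + g²/σ_t² − g²/(2c_t²)) x + (g² a_t/(2c_t²)) x_T − (g² b_t/(2c_t²)) x̂`. -/
theorem dbim_ode_equals_pf_ode (d : ℕ) (f g : ℝ → ℝ)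
    (hf : Continuous f) (hg : Continuous g) (hgpos : ∀ t, 0 < g t)
    (T : ℝ) (hT : 0 < T)
    (α σ2 SNR a b c : ℝ → ℝ)
    (hα : ∀ t, α t = Real.exp (∫ τ in (0:ℝ)..t, f τ))
    (hσ2 : ∀ t, σ2 t = α t ^ 2 * ∫ τ in (0:ℝ)..t, g τ ^ 2 / α τ ^ 2)
    (hSNR : ∀ t, SNR t = α t ^ 2 / σ2 t)
    (ha : ∀ t, a t = (α t / α T) * (SNR T / SNR t))
    (hb : ∀ t, b t = α t * (1 - SNR T / SNR t))
    (hc : ∀ t, c t = Real.sqrt (σ2 t * (1 - SNR T / SNR t))) :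
    ∀ t ∈ Set.Ioo 0 T, ∃ da db dc : ℝ,
      HasDerivAt a da t ∧ HasDerivAt b db t ∧ HasDerivAt c dc t ∧
      da - a t * dc / c t = g t ^ 2 * a t / (2 * c t ^ 2) ∧
      db - b t * dc / c t = -(g t ^ 2 * b t / (2 * c t ^ 2)) ∧
      ∀ x xT xhat : Fin d → ℝ,
        (dc / c t) • x + (g t ^ 2 * a t / (2 * c t ^ 2)) • xT
          - (g t ^ 2 * b t / (2 * c t ^ 2)) • xhat
        = (f t + g t ^ 2 / σ2 t - g t ^ 2 / (2 * c t ^ 2)) • x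
          + (g t ^ 2 * a t / (2 * c t ^ 2)) • xT
          - (g t ^ 2 * b t / (2 * c t ^ 2)) • xhat := by
  intro t ht
  set A : ℝ → ℝ := fun s => ∫ τ in (0:ℝ)..s, f τ with hAdef
  have hαe : α = fun s => Real.exp (A s) := funext hα
  have hαpos : ∀ s, 0 < α s := fun s => by rw [hαe]; exact Real.exp_pos _
  have hAd : ∀ s, HasDerivAt A (f s) s := fun s =>
    intervalIntegral.integral_hasDerivAt_right (hf.intervalIntegrable _ _)
      (hf.stronglyMeasurableAtFilter _ _) hf.continuousAt
  have hαd : ∀ s, HasDerivAt α (f s * α s) s := by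
    intro s
    have h1 := (hAd s).exp
    rw [hαe]
    simpa [mul_comm, ← hα s, hαe] using h1
  have hαcont : Continuous α := by
    rw [continuous_iff_continuousAt]; exact fun s => (hαd s).continuousAt
  set G : ℝ → ℝ := fun τ => g τ ^ 2 / α τ ^ 2 with hGdef
  have hGcont : Continuous G :=
    (hg.pow 2).div (hαcont.pow 2) (fun τ => pow_ne_zero 2 (hαpos τ).ne')
  have hGpos : ∀ s, 0 < G s := fun s =>
    div_pos (pow_pos (hgpos s) 2) (pow_pos (hαpos s) 2)
  set I : ℝ → ℝ := fun s => ∫ τ in (0:ℝ)..s, G τ with hIdef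
  have hId : ∀ s, HasDerivAt I (G s) s := fun s =>
    intervalIntegral.integral_hasDerivAt_right (hGcont.intervalIntegrable _ _)
      (hGcont.stronglyMeasurableAtFilter _ _) hGcont.continuousAt
  have hImono : StrictMono I := by
    apply strictMono_of_deriv_pos
    intro s; rw [(hId s).deriv]; exact hGpos s
  have hI0 : I 0 = 0 := intervalIntegral.integral_same
  have hIpos : ∀ s, 0 < s → 0 < I s := fun s hs => hI0 ▸ hImono hs
  have hItpos : 0 < I t := hIpos t ht.1
  have hITpos : 0 < I T := hIpos T hT
  have hIlt : I t < I T := hImono ht.2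
  have hσ2I : ∀ s, σ2 s = α s ^ 2 * I s := hσ2
  -- ratio identity on Ioo 0 T
  have hratio : ∀ s ∈ Set.Ioo (0:ℝ) T, SNR T / SNR s = I s / I T := by
    intro s hs
    have hIs : I s ≠ 0 := (hIpos s hs.1).ne'
    have h1 := (hαpos s).ne'
    have h2 := (hαpos T).ne'
    rw [hSNR, hSNR, hσ2I, hσ2I]
    field_simp
  have hmem : Set.Ioo (0:ℝ) T ∈ nhds t := Ioo_mem_nhds ht.1 ht.2
  -- model functions
  set h : ℝ → ℝ := fun s => α s ^ 2 * I s * (1 - I s / I T) with hhdef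
  have hKpos : 0 < 1 - I t / I T := by
    have : I t / I T < 1 := (div_lt_one hITpos).mpr hIlt
    linarith
  have hhpos : 0 < h t :=
    mul_pos (mul_pos (pow_pos (hαpos t) 2) hItpos) hKpos
  -- eventual equalities
  have haE : a =ᶠ[nhds t] fun s => α s * I s / (α T * I T) := by
    refine Filter.eventuallyEq_of_mem hmem (fun s hs => ?_)
    rw [ha s, hratio s hs]
    field_simp
  have hbE : b =ᶠ[nhds t] fun s => α s * (1 - I s / I T) := by
    refine Filter.eventuallyEq_of_mem hmem (fun s hs => ?_)
    rw [hb s, hratio s hs]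
  have hcE : c =ᶠ[nhds t] fun s => Real.sqrt (h s) := by
    refine Filter.eventuallyEq_of_mem hmem (fun s hs => ?_)
    rw [hc s, hratio s hs, hσ2I s, hhdef]
  -- derivatives
  have had : HasDerivAt a ((f t * α t * I t + α t * G t) / (α T * I T)) t :=
    HasDerivAt.congr_of_eventuallyEq (((hαd t).mul (hId t)).div_const _) haE
  have hbd : HasDerivAt b (f t * α t * (1 - I t / I T) + α t * (0 - G t / I T)) t :=
    HasDerivAt.congr_of_eventuallyEq
      ((hαd t).mul ((hasDerivAt_const t (1:ℝ)).sub ((hId t).div_const _))) hbE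
  set dh : ℝ := ((2:ℕ) * α t ^ 1 * (f t * α t) * I t + α t ^ 2 * G t) * (1 - I t / I T)
      + α t ^ 2 * I t * (0 - G t / I T) with hdhdef
  have hhd : HasDerivAt h dh t := by
    exact (((hαd t).pow 2).mul (hId t)).mul
      ((hasDerivAt_const t (1:ℝ)).sub ((hId t).div_const _))
  have hcd : HasDerivAt c (dh / (2 * Real.sqrt (h t))) t :=
    HasDerivAt.congr_of_eventuallyEq (hhd.sqrt hhpos.ne') hcE
  -- value facts
  have hct : c t = Real.sqrt (h t) := hcE.eq_of_nhds
  have hctpos : 0 < c t := hct ▸ Real.sqrt_pos.mpr hhpos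
  have hct2 : c t ^ 2 = h t := by rw [hct]; exact Real.sq_sqrt hhpos.le
  have hat : a t = α t * I t / (α T * I T) := haE.eq_of_nhds
  have hbt : b t = α t * (1 - I t / I T) := hbE.eq_of_nhds
  have hdiv : dh / (2 * Real.sqrt (h t)) / c t = dh / (2 * c t ^ 2) := by
    rw [hct, div_div]
    congr 1
    ring
  have hαtne : α t ≠ 0 := (hαpos t).ne'
  have hαTne : α T ≠ 0 := (hαpos T).ne'
  have hItne : I t ≠ 0 := hItpos.ne'
  have hITne : I T ≠ 0 := hITpos.ne'
  have hKne : 1 - I t / I T ≠ 0 := hKpos.ne'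
  have hgtne : g t ≠ 0 := (hgpos t).ne'
  have hsub : I T - I t ≠ 0 := sub_ne_zero.mpr hIlt.ne'
  have hone : 1 - I t / I T = (I T - I t) / I T := by field_simp
  have hscal : dh / (2 * Real.sqrt (h t)) / c t
      = f t + g t ^ 2 / σ2 t - g t ^ 2 / (2 * c t ^ 2) := by
    rw [hdiv, hct2, hσ2I t, hdhdef, hhdef]
    simp only [hGdef, hone]
    field_simp
    ring
  refine ⟨_, _, _, had, hbd, hcd, ?_, ?_, ?_⟩
  · rw [hat, mul_div_assoc, hdiv, hct2, hdhdef, hhdef]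
    simp only [hGdef, hone]
    field_simp
    ring
  · rw [hbt, mul_div_assoc, hdiv, hct2, hdhdef, hhdef]
    simp only [hGdef, hone]
    field_simp
    ring
  · intro x xT xhat
    rw [hscal]
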